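/- Let q ∈ H¹(Ω) be such that q restricted to the patch S(T) of an element T is a quadratic polynomial. Then the quasi-projection Q_h reproduces its gradient locally: Q_h ∇q = ∇q on T. -/
import Mathlib


open MeasureTheory

/-- Local reproduction property of the quasi-projection `Q_h` (Lemma 4): if `v`
(a component of the gradient `∇q` of a quadratic polynomial `q`) coincides on the
patch `S = S(T)` with a function in the span of the nodal basis `φ₁, …, φ_n`, then
`Q_h v = Σᵢ (∫ μᵢ v / cᵢ) φᵢ` equals `v` on the element `T`.  Here `{μᵢ}` is the
dual basis, biorthogonal to `{φᵢ}`, the `μᵢ` relevant to `T` (those in `I`) are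
supported in the patch `S`, and the remaining `φⱼ` vanish on `T`. -/
theorem quasi_projection_local_reproduction
    {X : Type*} [MeasurableSpace X] (ν : Measure X)
    (n : ℕ) (φ μ : Fin n → X → ℝ) (c : Fin n → ℝ)
    (hc : ∀ j, c j ≠ 0)
    (hbi : ∀ i j, ∫ x, μ i x * φ j x ∂ν = if i = j then c j else 0)
    (T S : Set X) (hTS : T ⊆ S)
    (I : Finset (Fin n))
    (hsupp : ∀ i ∈ I, ∀ x ∉ S, μ i x = 0)
    (hφT : ∀ j ∉ I, ∀ x ∈ T, φ j x = 0)
    (v : X → ℝ) (w : Fin n → ℝ)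
    (hv : ∀ x ∈ S, v x = ∑ j, w j * φ j x)
    (hint : ∀ i, Integrable (fun x => μ i x * v x) ν)
    (hintφ : ∀ i j, Integrable (fun x => μ i x * φ j x) ν) :
    ∀ x ∈ T, (∑ i, (∫ y, μ i y * v y ∂ν) / c i * φ i x) = v x := by
  intro x hx
  rw [hv x (hTS hx)]
  apply Finset.sum_congr rfl
  intro i _
  by_cases hi : i ∈ I
  · have heq : (fun y => μ i y * v y) = fun y => ∑ j, w j * (μ i y * φ j y) := by
      funext y
      by_cases hy : y ∈ S
      · rw [hv y hy, Finset.mul_sum]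
        exact Finset.sum_congr rfl fun j _ => by ring
      · simp [hsupp i hi y hy]
    rw [heq, integral_finset_sum _ (fun j _ => (hintφ i j).const_mul (w j))]
    have : ∀ j, (∫ y, w j * (μ i y * φ j y) ∂ν) = w j * (if i = j then c j else 0) := by
      intro j
      rw [integral_const_mul, hbi]
    simp_rw [this]
    simp only [mul_ite, mul_zero, Finset.sum_ite_eq, Finset.mem_univ, if_true]
    rw [mul_div_assoc, div_self (hc i), mul_one]
  · rw [hφT i hi x hx]
    ring
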